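/- Let Ã be a nonnegative n×n matrix whose every row sum is at most k (a natural number), so that γ = max row sum ≤ k and M = max entry of Ã ≤ k. If the combinatorial distance from τ to σ in the support digraph of Ã is r and 0 ≤ m < r, then (B^{r+m})_{σ,τ} ≤ (2k(1+m))^m · ω_{r+m}(σ,τ) · (2M)^r, where B = γI + Ã and ω_{r+m}(σ,τ) is the number of directed paths of length at most r+m from τ to σ. -/

import Mathlib

open scoped Classical

section
variable {n : Type*} [Fintype n] [DecidableEq n]

noncomputable def pathCount (A : Matrix n n ℝ) (τ : n) (i : ℕ) (σ : n) : ℕ :=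
  (Finset.univ.filter fun v : Fin (i + 1) → n =>
    v 0 = τ ∧ v (Fin.last i) = σ ∧
    ∀ j : Fin i, 0 < A (v j.succ) (v j.castSucc)).card

lemma pathCount_step (A : Matrix n n ℝ) (τ σ' : n) (i : ℕ) :
    ∑ b ∈ Finset.univ.filter (fun b => 0 < A σ' b), pathCount A τ i b
      ≤ pathCount A τ (i + 1) σ' := by
  classical
  set S := Finset.univ.filter (fun b => 0 < A σ' b) with hS
  set T := Finset.univ.filter (fun v : Fin (i + 1) → n =>
    v 0 = τ ∧ v (Fin.last i) ∈ S ∧ ∀ j : Fin i, 0 < A (v j.succ) (v j.castSucc)) with hT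
  have h1 : ∑ b ∈ S, pathCount A τ i b = T.card := by
    rw [Finset.card_eq_sum_card_fiberwise (f := fun v => v (Fin.last i)) (t := S)
      (fun v hv => by simp only [hT, Finset.mem_filter] at hv; exact (Finset.mem_filter.mp (show v ∈ T from hv)).2.2.1)]
    refine Finset.sum_congr rfl fun b hb => ?_
    unfold pathCount
    congr 1
    ext v
    simp only [hT, Finset.mem_filter, Finset.mem_univ, true_and]
    constructor
    · rintro ⟨h0, hl, hp⟩; exact ⟨⟨h0, hl ▸ hb, hp⟩, hl⟩
    · rintro ⟨⟨h0, _, hp⟩, hl⟩; exact ⟨h0, hl, hp⟩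
  rw [h1]
  unfold pathCount
  apply Finset.card_le_card_of_injOn (fun v : Fin (i + 1) → n => (Fin.snoc v σ' : Fin (i + 2) → n))
  · intro v hv
    simp only [hT, Finset.mem_filter, Finset.mem_univ, true_and] at hv ⊢
    obtain ⟨h0, hl, hp⟩ := (Finset.mem_filter.mp (show v ∈ T from hv)).2
    refine Finset.mem_filter.mpr ⟨Finset.mem_univ _, ?_⟩
    refine ⟨?_, by simp [Fin.snoc_last], ?_⟩
    · have h00 : (0 : Fin (i + 2)) = Fin.castSucc (0 : Fin (i + 1)) := rfl
      rw [h00, Fin.snoc_castSucc]; exact h0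
    · intro j
      induction j using Fin.lastCases with
      | last =>
        rw [Fin.succ_last, Fin.snoc_last, Fin.snoc_castSucc]
        simpa [hS] using hl
      | cast j' =>
        rw [Fin.succ_castSucc, Fin.snoc_castSucc, Fin.snoc_castSucc]
        exact hp j'
  · intro v _ u _ h
    funext j
    have := congrFun h (Fin.castSucc j)
    simpa [Fin.snoc_castSucc] using this

lemma pow_entry_nonneg (A : Matrix n n ℝ) (hA : ∀ a b, 0 ≤ A a b) (i : ℕ) :
    ∀ a b, 0 ≤ (A ^ i) a b := by
  induction i with
  | zero => intro a b; simp [Matrix.one_apply]; positivity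
  | succ i ih =>
    intro a b
    rw [pow_succ, Matrix.mul_apply]
    exact Finset.sum_nonneg fun c _ => mul_nonneg (ih a c) (hA c b)

lemma pow_entry_le (A : Matrix n n ℝ) (hA : ∀ a b, 0 ≤ A a b) (M : ℝ)
    (hM0 : 0 ≤ M) (hMub : ∀ a b, A a b ≤ M) (τ : n) :
    ∀ i σ', (A ^ i) σ' τ ≤ pathCount A τ i σ' * M ^ i := by
  intro i
  induction i with
  | zero =>
    intro σ'
    simp only [pow_zero, Matrix.one_apply, mul_one]
    by_cases h : σ' = τ
    · subst h
      simp only [if_pos rfl]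
      have : (fun _ => σ' : Fin 1 → n) ∈ (Finset.univ.filter fun v : Fin 1 → n =>
          v 0 = σ' ∧ v (Fin.last 0) = σ' ∧
          ∀ j : Fin 0, 0 < A (v j.succ) (v j.castSucc)) := by
        simp
      have hc : 1 ≤ pathCount A σ' 0 σ' := Finset.card_pos.mpr ⟨_, this⟩
      exact_mod_cast hc
    · simp [h]
  | succ i ih =>
    intro σ'
    rw [pow_succ', Matrix.mul_apply]
    have key : ∀ b, A σ' b * (A ^ i) b τ ≤
        (if 0 < A σ' b then (pathCount A τ i b : ℝ) * M ^ (i + 1) else 0) := by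
      intro b
      by_cases h : 0 < A σ' b
      · rw [if_pos h]
        calc A σ' b * (A ^ i) b τ ≤ M * ((pathCount A τ i b : ℝ) * M ^ i) := by
              apply mul_le_mul (hMub _ _) (ih b) (pow_entry_nonneg A hA i b τ) hM0
          _ = (pathCount A τ i b : ℝ) * M ^ (i + 1) := by ring
      · rw [if_neg h]
        have : A σ' b = 0 := le_antisymm (not_lt.mp h) (hA _ _)
        simp [this]
    calc ∑ b, A σ' b * (A ^ i) b τ
        ≤ ∑ b, (if 0 < A σ' b then (pathCount A τ i b : ℝ) * M ^ (i + 1) else 0) :=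
          Finset.sum_le_sum fun b _ => key b
      _ = ∑ b ∈ Finset.univ.filter (fun b => 0 < A σ' b),
            (pathCount A τ i b : ℝ) * M ^ (i + 1) := (Finset.sum_filter _ _).symm
      _ = (∑ b ∈ Finset.univ.filter (fun b => 0 < A σ' b),
            (pathCount A τ i b : ℝ)) * M ^ (i + 1) := by rw [Finset.sum_mul]
      _ ≤ (pathCount A τ (i + 1) σ' : ℝ) * M ^ (i + 1) := by
          apply mul_le_mul_of_nonneg_right _ (by positivity)
          exact_mod_cast Nat.cast_le.mpr (pathCount_step A τ σ' i)
end

/-- Impact of depth: if every row sum of the nonnegative matrix `Ã` is at most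
`k`, `γ` is its maximum row sum and `M` its maximum entry (so `γ ≤ k` and
`M ≤ k`), the combinatorial distance from `τ` to `σ` in the support digraph is
`r`, and `0 ≤ m < r`, then
`(B^(r+m))_{σ,τ} ≤ (2k(1+m))^m · ω_{r+m}(σ,τ) · (2M)^r` where `B = γ•I + Ã` and
`ω_{r+m}(σ,τ)` counts directed paths of length at most `r+m` from `τ` to `σ`. -/
theorem stmt_15 {n : Type*} [Fintype n] [DecidableEq n]
    (A : Matrix n n ℝ) (hA : ∀ a b, 0 ≤ A a b)
    (k : ℕ) (hk : ∀ a, ∑ b, A a b ≤ k)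
    (γ : ℝ) (hγ : IsGreatest (Set.range fun a => ∑ b, A a b) γ)
    (M : ℝ) (hM : IsGreatest (Set.range fun p : n × n => A p.1 p.2) M)
    (σ τ : n) (r m : ℕ) (hm : m < r)
    (hdist : ∀ i < r, (A ^ i) σ τ = 0) (hr : 0 < (A ^ r) σ τ)
    (ω : ℕ)
    (hω : ω = ∑ i ∈ Finset.range (r + m + 1),
        (Finset.univ.filter fun v : Fin (i + 1) → n =>
          v 0 = τ ∧ v (Fin.last i) = σ ∧
          ∀ j : Fin i, 0 < A (v j.succ) (v j.castSucc)).card) :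
    ((γ • (1 : Matrix n n ℝ) + A) ^ (r + m)) σ τ ≤
      (2 * k * ((1 : ℝ) + m)) ^ m * ω * (2 * M) ^ r := by
  classical
  obtain ⟨a0, ha0⟩ := hγ.1
  have hγ0 : 0 ≤ γ := ha0 ▸ Finset.sum_nonneg fun b _ => hA a0 b
  have hγk : γ ≤ k := ha0 ▸ hk a0
  obtain ⟨p, hp⟩ := hM.1
  have hM0 : 0 ≤ M := hp ▸ hA p.1 p.2
  have hMub : ∀ a b, A a b ≤ M := fun a b => hM.2 ⟨(a, b), rfl⟩
  have hMk : M ≤ k := by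
    rw [← hp]
    calc A p.1 p.2 ≤ ∑ b, A p.1 b :=
          Finset.single_le_sum (fun b _ => hA p.1 b) (Finset.mem_univ p.2)
      _ ≤ k := hk p.1
  have hωpc : (ω : ℝ) = ∑ i ∈ Finset.range (r + m + 1), (pathCount A τ i σ : ℝ) := by
    rw [hω]; push_cast; rfl
  -- binomial expansion
  have hcomm : Commute A (γ • (1 : Matrix n n ℝ)) := (Commute.one_right A).smul_right γ
  have hexp : (γ • (1 : Matrix n n ℝ) + A) ^ (r + m) =
      ∑ j ∈ Finset.range (r + m + 1),
        A ^ j * (γ • (1 : Matrix n n ℝ)) ^ (r + m - j) * ((r + m).choose j : Matrix n n ℝ) := by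
    rw [add_comm]
    exact hcomm.add_pow (r + m)
  have hterm : ∀ j, (A ^ j * (γ • (1 : Matrix n n ℝ)) ^ (r + m - j) *
      ((r + m).choose j : Matrix n n ℝ)) σ τ =
      ((r + m).choose j : ℝ) * γ ^ (r + m - j) * (A ^ j) σ τ := by
    intro j
    rw [smul_pow, one_pow, mul_smul_comm, mul_one]
    rw [show ((((r+m).choose j : ℕ)) : Matrix n n ℝ) = (((r+m).choose j : ℝ)) • (1 : Matrix n n ℝ) by
      rw [Matrix.smul_one_eq_diagonal]; exact (Matrix.diagonal_natCast _).symm]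
    simp [Matrix.smul_apply, Matrix.mul_apply, Matrix.one_apply, Finset.sum_ite_eq, mul_comm, mul_assoc, mul_left_comm]
  have hbound : ∀ j ∈ Finset.range (r + m + 1),
      ((r + m).choose j : ℝ) * γ ^ (r + m - j) * (A ^ j) σ τ ≤
      (2 : ℝ) ^ (r + m) * (k : ℝ) ^ m * M ^ r * (pathCount A τ j σ : ℝ) := by
    intro j hj
    clear hω hωpc hexp hterm
    rw [Finset.mem_range] at hj
    by_cases hjr : j < r
    · rw [hdist j hjr, mul_zero]
      positivity
    · push_neg at hjr
      obtain ⟨q, rfl⟩ := Nat.exists_eq_add_of_le hjr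
      have hqm : q ≤ m := by omega
      have e1 : ((r + m).choose (r + q) : ℝ) ≤ (2 : ℝ) ^ (r + m) := by
        have h2 : (r + m).choose (r + q) ≤ 2 ^ (r + m) := by
          calc (r + m).choose (r + q) ≤ ∑ i ∈ Finset.range (r + m + 1), (r + m).choose i :=
                Finset.single_le_sum (fun i _ => Nat.zero_le _) (Finset.mem_range.mpr (by omega))
            _ = 2 ^ (r + m) := Nat.sum_range_choose _
        exact_mod_cast h2
      have e2 : γ ^ (r + m - (r + q)) ≤ (k : ℝ) ^ (r + m - (r + q)) :=
        pow_le_pow_left₀ hγ0 hγk _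
      have e3 : (A ^ (r + q)) σ τ ≤ (pathCount A τ (r + q) σ : ℝ) * M ^ (r + q) :=
        pow_entry_le A hA M hM0 hMub τ (r + q) σ
      calc ((r + m).choose (r + q) : ℝ) * γ ^ (r + m - (r + q)) * (A ^ (r + q)) σ τ
          ≤ (2 : ℝ) ^ (r + m) * (k : ℝ) ^ (r + m - (r + q)) *
            ((pathCount A τ (r + q) σ : ℝ) * M ^ (r + q)) := by
            apply mul_le_mul (mul_le_mul e1 e2 (by positivity) (by positivity))
              e3 (pow_entry_nonneg A hA _ σ τ) (by positivity)
        _ = (2 : ℝ) ^ (r + m) * ((k : ℝ) ^ (m - q) * M ^ r * M ^ q) * (pathCount A τ (r + q) σ : ℝ) := by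
            rw [show r + m - (r + q) = m - q by omega, pow_add]
            ring
        _ ≤ (2 : ℝ) ^ (r + m) * ((k : ℝ) ^ (m - q) * M ^ r * (k : ℝ) ^ q) * (pathCount A τ (r + q) σ : ℝ) := by
            apply mul_le_mul_of_nonneg_right _ (by positivity)
            apply mul_le_mul_of_nonneg_left _ (by positivity)
            apply mul_le_mul_of_nonneg_left (pow_le_pow_left₀ hM0 hMk q) (by positivity)
        _ = (2 : ℝ) ^ (r + m) * (k : ℝ) ^ m * M ^ r * (pathCount A τ (r + q) σ : ℝ) := by
            rw [show (k : ℝ) ^ (m - q) * M ^ r * (k : ℝ) ^ q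
              = ((k : ℝ) ^ (m - q) * (k : ℝ) ^ q) * M ^ r by ring, ← pow_add,
              show m - q + q = m by omega]
            ring
  rw [hexp, Matrix.sum_apply]
  calc ∑ j ∈ Finset.range (r + m + 1),
        (A ^ j * (γ • (1 : Matrix n n ℝ)) ^ (r + m - j) * ((r + m).choose j : Matrix n n ℝ)) σ τ
      = ∑ j ∈ Finset.range (r + m + 1),
        ((r + m).choose j : ℝ) * γ ^ (r + m - j) * (A ^ j) σ τ :=
        Finset.sum_congr rfl fun j _ => hterm j
    _ ≤ ∑ j ∈ Finset.range (r + m + 1),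
        (2 : ℝ) ^ (r + m) * (k : ℝ) ^ m * M ^ r * (pathCount A τ j σ : ℝ) :=
        Finset.sum_le_sum hbound
    _ = (2 : ℝ) ^ (r + m) * (k : ℝ) ^ m * M ^ r * (ω : ℝ) := by
        rw [← Finset.mul_sum, hωpc]
    _ ≤ (2 * k * ((1 : ℝ) + m)) ^ m * ω * (2 * M) ^ r := by
        have h1m : (1 : ℝ) ≤ ((1 : ℝ) + m) ^ m := one_le_pow₀ (le_add_of_nonneg_right (Nat.cast_nonneg m))
        have : (2 : ℝ) ^ (r + m) * (k : ℝ) ^ m * M ^ r * (ω : ℝ) ≤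
            ((1 : ℝ) + m) ^ m * ((2 : ℝ) ^ (r + m) * (k : ℝ) ^ m * M ^ r * (ω : ℝ)) := by
          exact le_mul_of_one_le_left (by positivity) h1m
        calc (2 : ℝ) ^ (r + m) * (k : ℝ) ^ m * M ^ r * (ω : ℝ)
            ≤ ((1 : ℝ) + m) ^ m * ((2 : ℝ) ^ (r + m) * (k : ℝ) ^ m * M ^ r * (ω : ℝ)) := this
          _ = (2 * k * ((1 : ℝ) + m)) ^ m * ω * (2 * M) ^ r := by
              rw [pow_add, mul_pow, mul_pow, mul_pow]; ring
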